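/- arXiv:2208.11580 — 7 statements merged into one kernel-verified Lean document; each statement's English description precedes it below -/
import Mathlib

section
/- Let n ≥ 1, let H be an invertible real (n+1)×(n+1) matrix with inverse K = H⁻¹, and let p be an index such that the diagonal entry K p p is nonzero. Write H₋ₚ for the matrix obtained from H by deleting row p and column p (i.e. H.submatrix p.succAbove p.succAbove). Then H₋ₚ is invertible and its inverse is obtained by deleting row p and column p from the matrix K − (1 / K p p) • (column p of K) ⬝ (row p of K); that is, (H₋ₚ)⁻¹ = (K − (1 / K p p) • fun i j => K i p * K p j) restricted to rows and columns different from p. (One step of Gaussian elimination of row and column p in H⁻¹ followed by dropping them yields the inverse of H with row and column p removed.) -/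
open Matrix

/-- Row & Column Removal (Lemma 1): if `H` is invertible with inverse `K = H⁻¹` and
`K p p ≠ 0`, then the matrix obtained from `H` by deleting row and column `p` is
invertible, and its inverse is obtained by one step of Gaussian elimination of row
and column `p` in `K`, followed by dropping that row and column. -/
theorem row_and_column_removal (n : ℕ) (hn : 1 ≤ n)
    (H : Matrix (Fin (n + 1)) (Fin (n + 1)) ℝ) (hH : IsUnit H.det)
    (p : Fin (n + 1)) (hp : H⁻¹ p p ≠ 0) :
    IsUnit (H.submatrix p.succAbove p.succAbove).det ∧
      (H.submatrix p.succAbove p.succAbove)⁻¹ =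
        (H⁻¹ - (1 / H⁻¹ p p) •
            Matrix.of (fun i j => H⁻¹ i p * H⁻¹ p j)).submatrix
          p.succAbove p.succAbove := by
  have hHK : H * H⁻¹ = 1 := Matrix.mul_nonsing_inv H hH
  set K := H⁻¹ with hK
  set M := (K - (1 / K p p) • Matrix.of (fun i j => K i p * K p j)).submatrix
      p.succAbove p.succAbove with hM
  have hsum : ∀ a b : Fin (n+1), ∑ k, H a k * K k b = (1 : Matrix _ _ ℝ) a b := by
    intro a b; rw [← Matrix.mul_apply, hHK]
  have key : H.submatrix p.succAbove p.succAbove * M = 1 := by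
    ext i j
    rw [Matrix.mul_apply]
    simp only [hM, Matrix.submatrix_apply, Matrix.sub_apply, Matrix.smul_apply,
      Matrix.of_apply, smul_eq_mul]
    set f : Fin (n+1) → ℝ := fun k => H (p.succAbove i) k *
      (K k (p.succAbove j) - 1 / K p p * (K k p * K p (p.succAbove j))) with hf
    have hfp : f p = 0 := by
      simp only [hf]
      field_simp
      ring
    have htot : ∑ k, f k = f p + ∑ k : Fin n, f (p.succAbove k) :=
      Fin.sum_univ_succAbove f p
    have hval : ∑ k, f k = (if i = j then (1:ℝ) else 0) := by
      have : ∑ k, f k = (∑ k, H (p.succAbove i) k * K k (p.succAbove j))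
          - 1 / K p p * K p (p.succAbove j) *
            (∑ k, H (p.succAbove i) k * K k p) := by
        rw [Finset.mul_sum, ← Finset.sum_sub_distrib]
        refine Finset.sum_congr rfl fun k _ => ?_
        simp only [hf]; ring
      rw [this, hsum, hsum]
      have h1 : (1 : Matrix (Fin (n+1)) (Fin (n+1)) ℝ) (p.succAbove i) p = 0 := by
        simp [Matrix.one_apply, Fin.succAbove_ne p i]
      have h2 : (1 : Matrix (Fin (n+1)) (Fin (n+1)) ℝ) (p.succAbove i) (p.succAbove j)
          = if i = j then (1:ℝ) else 0 := by
        simp [Matrix.one_apply, (Fin.succAbove_right_injective (p := p)).eq_iff]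
      rw [h1, h2]; ring
    have : ∑ k : Fin n, f (p.succAbove k) = (if i = j then (1:ℝ) else 0) := by
      rw [← hval, htot, hfp, zero_add]
    rw [this, Matrix.one_apply]
  have hunit : IsUnit (H.submatrix p.succAbove p.succAbove).det := by
    have := congrArg Matrix.det key
    rw [Matrix.det_mul, Matrix.det_one] at this
    exact IsUnit.of_mul_eq_one _ this
  exact ⟨hunit, Matrix.inv_eq_right_inv key⟩
end

section
/- Let H be a symmetric positive definite real n×n matrix, let w : Fin n → ℝ, and let p : Fin n. Then (H⁻¹) p p > 0, and among all vectors δ : Fin n → ℝ satisfying the constraint δ p = −(w p), the quadratic form δ ⬝ᵥ (H *ᵥ δ) is minimized, with minimum value (w p)² / (H⁻¹) p p, and the minimum is attained at the vector δ* := −((w p) / (H⁻¹) p p) • (fun i => (H⁻¹) i p). That is, for every δ with δ p = −(w p) one has δ ⬝ᵥ (H *ᵥ δ) ≥ (w p)² / (H⁻¹) p p, with equality when δ = δ*. -/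
open Matrix

/-- The Optimal Brain Surgeon (OBS) single-weight pruning formula: for a symmetric
positive definite Hessian `H`, `(H⁻¹) p p > 0`, and among all updates `δ` with
`δ p = -(w p)`, the quadratic form `δᵀ H δ` is minimized with minimum value
`(w p)² / (H⁻¹) p p`, attained at `δ* = -((w p) / (H⁻¹) p p) • (H⁻¹ column p)`. -/
theorem obs_single_weight_pruning (n : ℕ) (H : Matrix (Fin n) (Fin n) ℝ)
    (hH : H.PosDef) (w : Fin n → ℝ) (p : Fin n) :
    0 < H⁻¹ p p ∧
      (∀ δ : Fin n → ℝ, δ p = -(w p) →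
        (w p) ^ 2 / H⁻¹ p p ≤ δ ⬝ᵥ (H *ᵥ δ)) ∧
      (-((w p) / H⁻¹ p p) • (fun i => H⁻¹ i p)) p = -(w p) ∧
      (-((w p) / H⁻¹ p p) • (fun i => H⁻¹ i p)) ⬝ᵥ
          (H *ᵥ (-((w p) / H⁻¹ p p) • (fun i => H⁻¹ i p))) =
        (w p) ^ 2 / H⁻¹ p p := by
  have hdet : IsUnit H.det := isUnit_iff_ne_zero.mpr (ne_of_gt hH.det_pos)
  set c : Fin n → ℝ := fun i => H⁻¹ i p with hc
  have hHc : H *ᵥ c = Pi.single p 1 := by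
    funext i
    have : (H * H⁻¹) i p = (1 : Matrix (Fin n) (Fin n) ℝ) i p := by
      rw [Matrix.mul_nonsing_inv H hdet]
    simpa [Matrix.mul_apply, Matrix.mulVec, dotProduct, Matrix.one_apply,
      Pi.single_apply, eq_comm] using this
  have hcHc : c ⬝ᵥ (H *ᵥ c) = H⁻¹ p p := by
    rw [hHc]
    simp [dotProduct, Pi.single_apply, c]
  have hq : 0 < H⁻¹ p p := by
    rw [← hcHc]
    have hcne : c ≠ 0 := by
      intro h
      have : H *ᵥ c = 0 := by rw [h, Matrix.mulVec_zero]
      rw [hHc] at this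
      have := congrFun this p
      simp at this
    simpa using hH.dotProduct_mulVec_pos hcne
  set q : ℝ := H⁻¹ p p
  set δs : Fin n → ℝ := -((w p) / q) • c with hδs
  have hδsp : δs p = -(w p) := by
    have : δs p = -((w p) / q) * q := rfl
    rw [this]
    field_simp
  have hHδs : H *ᵥ δs = -((w p) / q) • (Pi.single p 1 : Fin n → ℝ) := by
    rw [hδs, Matrix.mulVec_smul, hHc]
  have hval : δs ⬝ᵥ (H *ᵥ δs) = (w p) ^ 2 / q := by
    rw [hHδs, hδs]
    simp only [smul_dotProduct, dotProduct_smul, smul_eq_mul]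
    have : c ⬝ᵥ Pi.single p 1 = q := by
      simp [dotProduct, Pi.single_apply, c, q]
    rw [this]
    field_simp
  refine ⟨hq, ?_, hδsp, hval⟩
  intro δ hδ
  have he : (δ - δs) p = 0 := by simp [hδ, hδsp]
  set e : Fin n → ℝ := δ - δs with heq
  have heHδs : e ⬝ᵥ (H *ᵥ δs) = 0 := by
    rw [hHδs]
    simp [dotProduct, Pi.single_apply, he]
  have hsym : Hᵀ = H := by
    have := hH.isHermitian.eq
    simpa [Matrix.conjTranspose_eq_transpose_of_trivial] using this
  have hδsHe : δs ⬝ᵥ (H *ᵥ e) = 0 := by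
    rw [Matrix.dotProduct_mulVec, ← Matrix.mulVec_transpose, hsym, dotProduct_comm]
    exact heHδs
  have heHe : 0 ≤ e ⬝ᵥ (H *ᵥ e) := by
    simpa using hH.posSemidef.dotProduct_mulVec_nonneg e
  have hsplit : δ ⬝ᵥ (H *ᵥ δ)
      = δs ⬝ᵥ (H *ᵥ δs) + δs ⬝ᵥ (H *ᵥ e) + e ⬝ᵥ (H *ᵥ δs) + e ⬝ᵥ (H *ᵥ e) := by
    have : δ = δs + e := by simp [heq]
    rw [this, Matrix.mulVec_add, dotProduct_add, add_dotProduct,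
      add_dotProduct]
    ring
  rw [hsplit, hval, hδsHe, heHδs]
  linarith
end

section
/- Let H be a symmetric positive definite real n×n matrix, let w : Fin n → ℝ, let p : Fin n, and let q ∈ ℝ be a target value (the quantized value of w p). Then among all vectors δ : Fin n → ℝ satisfying δ p = q − (w p), the quadratic form δ ⬝ᵥ (H *ᵥ δ) is minimized, with minimum value (q − w p)² / (H⁻¹) p p, and the minimum is attained at δ* := −(((w p) − q) / (H⁻¹) p p) • (fun i => (H⁻¹) i p). In particular, when q = 0 this recovers the OBS pruning formula. -/
open Matrix

/-- The Optimal Brain Quantizer (OBQ) formula: for a symmetric positive definite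
Hessian `H`, among all updates `δ` with `δ p = q - w p`, the quadratic form
`δᵀ H δ` is minimized with minimum value `(q - w p)² / (H⁻¹) p p`, attained at
`δ* = -(((w p) - q) / (H⁻¹) p p) • (H⁻¹ column p)`. -/
theorem obq_single_weight_quantization (n : ℕ) (H : Matrix (Fin n) (Fin n) ℝ)
    (hH : H.PosDef) (w : Fin n → ℝ) (p : Fin n) (q : ℝ) :
    (∀ δ : Fin n → ℝ, δ p = q - w p →
        (q - w p) ^ 2 / H⁻¹ p p ≤ δ ⬝ᵥ (H *ᵥ δ)) ∧
      (-((w p - q) / H⁻¹ p p) • (fun i => H⁻¹ i p)) p = q - w p ∧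
      (-((w p - q) / H⁻¹ p p) • (fun i => H⁻¹ i p)) ⬝ᵥ
          (H *ᵥ (-((w p - q) / H⁻¹ p p) • (fun i => H⁻¹ i p))) =
        (q - w p) ^ 2 / H⁻¹ p p := by
  have hdet : IsUnit H.det := isUnit_iff_ne_zero.mpr hH.det_pos.ne'
  have hinv : (H⁻¹).PosDef := hH.inv
  have hpp : 0 < H⁻¹ p p := by
    have := hinv.dotProduct_mulVec_pos (x := Pi.single p 1) (by simp [Function.ne_iff])
    simpa [dotProduct, mulVec, Pi.single_apply, Finset.sum_ite_eq] using this
  set u : Fin n → ℝ := fun i => H⁻¹ i p with hu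
  have hsym : ∀ i, H⁻¹ i p = H⁻¹ p i := fun i => by
    have := hinv.isHermitian.apply i p
    simpa using this.symm
  have hHt : Hᵀ = H := by
    ext i j
    have := hH.isHermitian.apply i j
    simpa using this
  have key : ∀ δ : Fin n → ℝ, u ⬝ᵥ (H *ᵥ δ) = δ p := by
    intro δ
    have h1 : H⁻¹ * H = 1 := nonsing_inv_mul H hdet
    calc u ⬝ᵥ (H *ᵥ δ) = ∑ i, H⁻¹ p i * (H *ᵥ δ) i :=
          Finset.sum_congr rfl fun i _ => show H⁻¹ i p * (H *ᵥ δ) i = _ by rw [hsym i]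
      _ = (H⁻¹ *ᵥ (H *ᵥ δ)) p := rfl
      _ = δ p := by rw [mulVec_mulVec, h1, one_mulVec]
  have key2 : ∀ δ : Fin n → ℝ, δ ⬝ᵥ (H *ᵥ u) = δ p := by
    intro δ
    rw [dotProduct_mulVec, ← mulVec_transpose, hHt, dotProduct_comm]
    exact key δ
  have hup : u p = H⁻¹ p p := rfl
  have huu : u ⬝ᵥ (H *ᵥ u) = H⁻¹ p p := key u
  set a : ℝ := H⁻¹ p p with ha
  have ha0 : a ≠ 0 := hpp.ne'
  refine ⟨?_, ?_, ?_⟩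
  · intro δ hδ
    set c : ℝ := (q - w p) / a with hc
    have hcH : c * a = q - w p := div_mul_cancel₀ _ ha0
    have h0 : 0 ≤ (δ - c • u) ⬝ᵥ (H *ᵥ (δ - c • u)) := by
      simpa using hH.posSemidef.dotProduct_mulVec_nonneg (δ - c • u)
    have expand : (δ - c • u) ⬝ᵥ (H *ᵥ (δ - c • u)) =
        δ ⬝ᵥ (H *ᵥ δ) - c * (q - w p) := by
      rw [sub_dotProduct, mulVec_sub, dotProduct_sub, dotProduct_sub,
        smul_dotProduct, smul_dotProduct, mulVec_smul, dotProduct_smul,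
        dotProduct_smul, key δ, key2 δ, huu, hδ]
      rw [smul_eq_mul, smul_eq_mul, smul_eq_mul, hcH]
      ring
    have hgoal : (q - w p) ^ 2 / a = c * (q - w p) := by
      rw [hc]; ring
    rw [hgoal]
    linarith [h0, expand]
  · show -((w p - q) / a) * u p = q - w p
    rw [hup, neg_mul, div_mul_cancel₀ _ ha0]
    ring
  · rw [smul_dotProduct, mulVec_smul, dotProduct_smul, huu,
      smul_eq_mul, smul_eq_mul]
    rw [show -((w p - q)/a) = (q - w p)/a by ring, div_mul_cancel₀ _ ha0,
      div_mul_eq_mul_div, sq]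
end

section
/- Let H be a symmetric positive definite real n×n matrix, let w : Fin n → ℝ, let k ≥ 1 and let ι : Fin k ↪ Fin n be an injection selecting a set P of k indices. Write K := H⁻¹, let K_P := K.submatrix ι ι be the principal submatrix of K on the selected indices, and let w_P := w ∘ ι. Then K_P is positive definite (hence invertible), and among all vectors δ : Fin n → ℝ satisfying δ (ι j) = −(w (ι j)) for all j : Fin k, the quadratic form δ ⬝ᵥ (H *ᵥ δ) is minimized, with minimum value w_P ⬝ᵥ ((K_P)⁻¹ *ᵥ w_P), and the minimum is attained at the vector δ* given by δ* i = −∑ j, K i (ι j) * (((K_P)⁻¹ *ᵥ w_P) j). -/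
open Matrix

lemma extend_dot {n k : ℕ} (ι : Fin k ↪ Fin n) (x : Fin k → ℝ) (g : Fin n → ℝ) :
    (fun i => ∑ j, if ι j = i then x j else 0) ⬝ᵥ g = ∑ j, x j * g (ι j) := by
  simp only [dotProduct, Finset.sum_mul]
  rw [Finset.sum_comm]
  refine Finset.sum_congr rfl fun j _ => ?_
  simp [ite_mul, Finset.sum_ite_eq (Finset.univ) (ι j) (fun i => x j * g i)]

lemma mulVec_extend {n k : ℕ} (K : Matrix (Fin n) (Fin n) ℝ) (ι : Fin k ↪ Fin n)
    (x : Fin k → ℝ) (i : Fin n) :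
    (K *ᵥ fun i' => ∑ j, if ι j = i' then x j else 0) i = ∑ j, K i (ι j) * x j := by
  simp only [mulVec, dotProduct, Finset.mul_sum]
  rw [Finset.sum_comm]
  refine Finset.sum_congr rfl fun j _ => ?_
  simp [mul_ite, Finset.sum_ite_eq (Finset.univ) (ι j) (fun i' => K i i' * x j)]

lemma extend_apply {n k : ℕ} (ι : Fin k ↪ Fin n) (x : Fin k → ℝ) (j : Fin k) :
    (∑ j', if ι j' = ι j then x j' else 0) = x j := by
  simp [EmbeddingLike.apply_eq_iff_eq, Finset.sum_ite_eq' Finset.univ j x]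

lemma posdef_submatrix {n k : ℕ} {K : Matrix (Fin n) (Fin n) ℝ} (hK : K.PosDef)
    (ι : Fin k ↪ Fin n) : (K.submatrix ι ι).PosDef := by
  refine PosDef.of_dotProduct_mulVec_pos (hK.isHermitian.submatrix ι) fun x hx => ?_
  set y : Fin n → ℝ := fun i => ∑ j, if ι j = i then x j else 0 with hy
  have hyx : ∀ j, y (ι j) = x j := fun j => extend_apply ι x j
  have hyne : y ≠ 0 := by
    obtain ⟨j, hj⟩ := Function.ne_iff.mp hx
    exact Function.ne_iff.mpr ⟨ι j, by simpa [hyx j] using hj⟩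
  have key : x ⬝ᵥ (K.submatrix ι ι *ᵥ x) = y ⬝ᵥ (K *ᵥ y) := by
    rw [hy, extend_dot ι x (K *ᵥ y)]
    simp only [hy, mulVec_extend K ι x]
    simp [dotProduct, mulVec, submatrix_apply, Finset.mul_sum]
  simpa [star_trivial, key] using hK.dotProduct_mulVec_pos hyne

/-- The group OBS formula for pruning a block `P` of `k` weights simultaneously:
with `K = H⁻¹` and `K_P` the principal submatrix of `K` on the selected indices,
`K_P` is positive definite, and among all updates `δ` zeroing out the weights in
`P`, the quadratic form `δᵀ H δ` is minimized with minimum value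
`w_Pᵀ (K_P)⁻¹ w_P`, attained at `δ*_i = -∑ j, K i (ι j) * ((K_P)⁻¹ w_P) j`. -/
theorem group_obs_pruning (n k : ℕ) (hk : 1 ≤ k)
    (H : Matrix (Fin n) (Fin n) ℝ) (hH : H.PosDef)
    (w : Fin n → ℝ) (ι : Fin k ↪ Fin n) :
    ((H⁻¹).submatrix ι ι).PosDef ∧
      (∀ δ : Fin n → ℝ, (∀ j : Fin k, δ (ι j) = -(w (ι j))) →
        (w ∘ ι) ⬝ᵥ (((H⁻¹).submatrix ι ι)⁻¹ *ᵥ (w ∘ ι)) ≤ δ ⬝ᵥ (H *ᵥ δ)) ∧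
      (∀ j : Fin k,
        (fun i => -∑ j', H⁻¹ i (ι j') * ((((H⁻¹).submatrix ι ι)⁻¹ *ᵥ (w ∘ ι)) j'))
            (ι j) = -(w (ι j))) ∧
      (fun i => -∑ j', H⁻¹ i (ι j') * ((((H⁻¹).submatrix ι ι)⁻¹ *ᵥ (w ∘ ι)) j')) ⬝ᵥ
          (H *ᵥ
            (fun i => -∑ j', H⁻¹ i (ι j') * ((((H⁻¹).submatrix ι ι)⁻¹ *ᵥ (w ∘ ι)) j'))) =
        (w ∘ ι) ⬝ᵥ (((H⁻¹).submatrix ι ι)⁻¹ *ᵥ (w ∘ ι)) := by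
  set K := H⁻¹ with hKdef
  set KP := K.submatrix ι ι with hKPdef
  have hK : K.PosDef := hH.inv
  have hKP : KP.PosDef := posdef_submatrix hK ι
  set lam : Fin k → ℝ := KP⁻¹ *ᵥ (w ∘ ι) with hlam
  set z : Fin n → ℝ := fun i => ∑ j, if ι j = i then lam j else 0 with hz
  set δs : Fin n → ℝ := fun i => -∑ j', K i (ι j') * lam j' with hδsdef
  have hδs : δs = -(K *ᵥ z) := by
    funext i
    simp only [hδsdef, Pi.neg_apply, hz, mulVec_extend K ι lam i]
  have hKPinv : KP * KP⁻¹ = 1 :=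
    Matrix.mul_nonsing_inv _ (isUnit_iff_ne_zero.mpr hKP.det_pos.ne')
  have hHK : H * K = 1 := Matrix.mul_nonsing_inv H (isUnit_iff_ne_zero.mpr hH.det_pos.ne')
  have hKz : ∀ j, (K *ᵥ z) (ι j) = w (ι j) := by
    intro j
    have h1 : (K *ᵥ z) (ι j) = (KP *ᵥ lam) j := by
      rw [hz, mulVec_extend K ι lam (ι j)]
      simp [mulVec, dotProduct, hKPdef, submatrix_apply]
    have h2 : KP *ᵥ lam = w ∘ ι := by
      rw [hlam, mulVec_mulVec, hKPinv, one_mulVec]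
    rw [h1, h2]; rfl
  have hHKz : H *ᵥ (K *ᵥ z) = z := by
    rw [mulVec_mulVec, hHK, one_mulVec]
  have hHδs : H *ᵥ δs = -z := by
    rw [hδs, mulVec_neg, hHKz]
  have hsym : ∀ a b : Fin n → ℝ, a ⬝ᵥ (H *ᵥ b) = b ⬝ᵥ (H *ᵥ a) := by
    intro a b
    have hHt : Hᵀ = H := by
      rw [← conjTranspose_eq_transpose_of_trivial, hH.isHermitian.eq]
    rw [dotProduct_mulVec, ← mulVec_transpose, hHt, dotProduct_comm]
  have hval : δs ⬝ᵥ (H *ᵥ δs) = (w ∘ ι) ⬝ᵥ lam := by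
    rw [hHδs, hδs, neg_dotProduct, dotProduct_neg, neg_neg, dotProduct_comm, hz,
      extend_dot ι lam (K *ᵥ z)]
    rw [show (∑ j, lam j * (K *ᵥ z) (ι j)) = ∑ j, lam j * (w ∘ ι) j from
      Finset.sum_congr rfl fun j _ => by rw [hKz j]; rfl]
    rw [← dotProduct, dotProduct_comm]
  have hconstraint : ∀ j, δs (ι j) = -(w (ι j)) := by
    intro j
    rw [hδs, Pi.neg_apply, hKz j]
  refine ⟨hKP, ?_, hconstraint, hval⟩
  intro δ hδ
  set d : Fin n → ℝ := δ - δs with hd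
  have hdz : ∀ j, d (ι j) = 0 := by
    intro j
    simp [hd, hδ j, hconstraint j]
  have hcross : d ⬝ᵥ (H *ᵥ δs) = 0 := by
    rw [hHδs, dotProduct_neg, dotProduct_comm, hz, extend_dot ι lam d]
    simp [hdz]
  have hδeq : δ = d + δs := by rw [hd]; abel
  have hpos : 0 ≤ d ⬝ᵥ (H *ᵥ d) := by simpa using hH.posSemidef.dotProduct_mulVec_nonneg d
  have hexp : δ ⬝ᵥ (H *ᵥ δ) = d ⬝ᵥ (H *ᵥ d) + (w ∘ ι) ⬝ᵥ lam := by
    rw [hδeq, mulVec_add, add_dotProduct, dotProduct_add, dotProduct_add,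
      hsym δs d, hcross, hval]
    ring
  rw [hexp]
  linarith
end

section
/- Let X be a real d×N matrix such that A := X * Xᵀ is positive definite, let w : Fin d → ℝ and p : Fin d. Then among all vectors ŵ : Fin d → ℝ with ŵ p = 0, the layer-wise squared error ∑ j : Fin N, (∑ i, ŵ i * X i j − ∑ i, w i * X i j)² is minimized, with minimum value (w p)² / (A⁻¹) p p, and the minimum is attained at ŵ* := w − ((w p) / (A⁻¹) p p) • (fun i => (A⁻¹) i p). That is, greedily pruning a single weight p with the OBS update yields exactly the optimal compressed row subject to the sparsity constraint ŵ p = 0. -/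
open Matrix

/-- Greedy single-weight pruning with the exact OBS update is optimal for the
layer-wise compression problem: with `A = XXᵀ` positive definite, among all rows
`wComp` with `wComp p = 0`, the layer-wise squared error is minimized with minimum
value `(w p)² / (A⁻¹) p p`, attained at
`wComp* = w − ((w p) / (A⁻¹) p p) • (A⁻¹ column p)`. -/
theorem obs_layerwise_pruning_optimal (d N : ℕ)
    (X : Matrix (Fin d) (Fin N) ℝ) (hX : (X * Xᵀ).PosDef)
    (w : Fin d → ℝ) (p : Fin d) :
    (∀ wComp : Fin d → ℝ, wComp p = 0 →
        (w p) ^ 2 / (X * Xᵀ)⁻¹ p p ≤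
          ∑ j : Fin N, (∑ i, wComp i * X i j - ∑ i, w i * X i j) ^ 2) ∧
      (w - ((w p) / (X * Xᵀ)⁻¹ p p) • (fun i => (X * Xᵀ)⁻¹ i p)) p = 0 ∧
      ∑ j : Fin N,
          (∑ i, (w - ((w p) / (X * Xᵀ)⁻¹ p p) • (fun i => (X * Xᵀ)⁻¹ i p)) i * X i j -
            ∑ i, w i * X i j) ^ 2 =
        (w p) ^ 2 / (X * Xᵀ)⁻¹ p p := by
  classical
  set A := X * Xᵀ with hA
  have hdet : IsUnit A.det := hX.det_pos.ne'.isUnit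
  have hα : 0 < A⁻¹ p p := by
    have h := hX.inv.dotProduct_mulVec_pos (x := Pi.single p 1) (by intro h; have := congrFun h p; simp at this)
    simpa [dotProduct, mulVec, Pi.single_apply, Finset.mul_sum] using h
  set α := A⁻¹ p p with hαdef
  have hαne : α ≠ 0 := hα.ne'
  set c : Fin d → ℝ := fun i => A⁻¹ i p with hc
  have hAc : A *ᵥ c = Pi.single p 1 := by
    funext i
    have h1 : (A *ᵥ c) i = (A * A⁻¹) i p := by
      simp [mulVec, dotProduct, Matrix.mul_apply, hc]
    rw [h1, Matrix.mul_nonsing_inv A hdet]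
    simp [Matrix.one_apply, Pi.single_apply, eq_comm]
  have hdotc : ∀ u : Fin d → ℝ, u ⬝ᵥ (A *ᵥ c) = u p := by
    intro u; rw [hAc]; simp [dotProduct, Pi.single_apply]
  have hAsymm : Aᵀ = A := by
    rw [hA, Matrix.transpose_mul, Matrix.transpose_transpose]
  have hswap : ∀ u v : Fin d → ℝ, u ⬝ᵥ (A *ᵥ v) = v ⬝ᵥ (A *ᵥ u) := by
    intro u v
    have h2 : u ᵥ* A = A *ᵥ u := by
      conv_lhs => rw [← hAsymm]
      rw [Matrix.vecMul_transpose]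
    rw [Matrix.dotProduct_mulVec, h2, dotProduct_comm]
  have hsum : ∀ v : Fin d → ℝ,
      ∑ j : Fin N, (∑ i, v i * X i j) ^ 2 = v ⬝ᵥ (A *ᵥ v) := by
    intro v
    have h1 : ∀ j, (∑ i, v i * X i j) = (v ᵥ* X) j := by
      intro j; simp [vecMul, dotProduct]
    simp_rw [h1]
    rw [hA, ← Matrix.mulVec_mulVec, Matrix.dotProduct_mulVec v X, Matrix.mulVec_transpose]
    simp [dotProduct, pow_two]
  set s : ℝ := w p / α with hs
  have hcp : c p = α := rfl
  refine ⟨?_, ?_, ?_⟩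
  · intro wComp hwp
    set δ : Fin d → ℝ := wComp - w with hδ
    have hδp : δ p = -(w p) := by simp [hδ, hwp]
    have herr : ∑ j : Fin N, (∑ i, wComp i * X i j - ∑ i, w i * X i j) ^ 2
        = δ ⬝ᵥ (A *ᵥ δ) := by
      rw [← hsum δ]
      congr 1; funext j
      rw [← Finset.sum_sub_distrib]
      simp [hδ, sub_mul]
    rw [herr]
    have h0 : 0 ≤ (δ + s • c) ⬝ᵥ (A *ᵥ (δ + s • c)) := by
      simpa using hX.posSemidef.dotProduct_mulVec_nonneg (δ + s • c)
    have hexp : (δ + s • c) ⬝ᵥ (A *ᵥ (δ + s • c))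
        = δ ⬝ᵥ (A *ᵥ δ) + s * δ p + (s * δ p + s * (s * α)) := by
      rw [Matrix.mulVec_add, Matrix.mulVec_smul, dotProduct_add, add_dotProduct,
        add_dotProduct, dotProduct_smul, smul_dotProduct, smul_dotProduct,
        dotProduct_smul, hdotc δ, hswap c δ, hdotc δ, hdotc c, hcp]
      try simp only [smul_eq_mul]
      try ring
    rw [hexp, hδp] at h0
    have e1 : s * α = w p := div_mul_cancel₀ _ hαne
    have e2 : (w p) ^ 2 / α = s * w p := by
      rw [hs]; field_simp
    have e3 : s * (s * α) = s * w p := by rw [e1]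
    rw [e2]; linarith
  · simp [hcp, smul_eq_mul, div_mul_cancel₀ (w p) hαne]
    rw [hs, div_mul_cancel₀ (w p) hαne, sub_self]
  · have herr : ∑ j : Fin N,
        (∑ i, (w - s • (fun i => A⁻¹ i p)) i * X i j - ∑ i, w i * X i j) ^ 2
        = (-(s • c)) ⬝ᵥ (A *ᵥ (-(s • c))) := by
      rw [← hsum (-(s • c))]
      congr 1; funext j
      rw [← Finset.sum_sub_distrib]
      congr 1
      refine Finset.sum_congr rfl fun i _ => ?_
      simp only [Pi.sub_apply, Pi.smul_apply, Pi.neg_apply, smul_eq_mul, hc]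
      ring
    rw [herr]
    rw [Matrix.mulVec_neg, Matrix.mulVec_smul, dotProduct_neg, neg_dotProduct,
      dotProduct_smul, smul_dotProduct, hdotc c, hcp]
    simp [smul_eq_mul, hs]
    field_simp
end

section
/- Let X be a real d×N matrix such that A := X * Xᵀ is positive definite, let w : Fin d → ℝ, p : Fin d, and let q ∈ ℝ. Then among all vectors ŵ : Fin d → ℝ with ŵ p = q, the layer-wise squared error ∑ j : Fin N, (∑ i, ŵ i * X i j − ∑ i, w i * X i j)² is minimized, with minimum value (q − w p)² / (A⁻¹) p p, and the minimum is attained at ŵ* := w − (((w p) − q) / (A⁻¹) p p) • (fun i => (A⁻¹) i p). That is, quantizing a single weight p to the value q with the OBQ update yields exactly the optimal compressed row subject to the constraint ŵ p = q. -/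
open Matrix

lemma obq_quad_form_eq (d N : ℕ) (X : Matrix (Fin d) (Fin N) ℝ) (δ : Fin d → ℝ) :
    ∑ j : Fin N, (∑ i, δ i * X i j)^2 = δ ⬝ᵥ ((X * Xᵀ) *ᵥ δ) := by
  simp only [dotProduct, Matrix.mulVec, Matrix.mul_apply, Matrix.transpose_apply,
    dotProduct, sq, Finset.sum_mul, Finset.mul_sum]
  rw [Finset.sum_comm]
  congr 1; ext i
  rw [Finset.sum_comm]
  congr 1; ext j
  congr 1; ext k
  ring

/-- Single-weight quantization with the exact OBQ update is optimal for the
layer-wise compression problem: with `A = XXᵀ` positive definite, among all rows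
`wComp` with `wComp p = q`, the layer-wise squared error is minimized with minimum
value `(q − w p)² / (A⁻¹) p p`, attained at
`wComp* = w − (((w p) − q) / (A⁻¹) p p) • (A⁻¹ column p)`. -/
theorem obq_layerwise_quantization_optimal (d N : ℕ)
    (X : Matrix (Fin d) (Fin N) ℝ) (hX : (X * Xᵀ).PosDef)
    (w : Fin d → ℝ) (p : Fin d) (q : ℝ) :
    (∀ wComp : Fin d → ℝ, wComp p = q →
        (q - w p) ^ 2 / (X * Xᵀ)⁻¹ p p ≤
          ∑ j : Fin N, (∑ i, wComp i * X i j - ∑ i, w i * X i j) ^ 2) ∧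
      (w - ((w p - q) / (X * Xᵀ)⁻¹ p p) • (fun i => (X * Xᵀ)⁻¹ i p)) p = q ∧
      ∑ j : Fin N,
          (∑ i, (w - ((w p - q) / (X * Xᵀ)⁻¹ p p) • (fun i => (X * Xᵀ)⁻¹ i p)) i * X i j -
            ∑ i, w i * X i j) ^ 2 =
        (q - w p) ^ 2 / (X * Xᵀ)⁻¹ p p := by
  set A := X * Xᵀ with hA
  set B := A⁻¹ p p with hB
  set c := q - w p with hc
  have hAdet : IsUnit A.det := isUnit_iff_ne_zero.mpr (ne_of_gt hX.det_pos)
  have hAinv : A * A⁻¹ = 1 := Matrix.mul_nonsing_inv A hAdet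
  have hsymm : Aᵀ = A := (hX.isHermitian).eq
  have hBpos : 0 < B := by
    have := (hX.inv).dotProduct_mulVec_pos (x := Pi.single p 1)
      (by simp [Pi.single_eq_same, ne_eq])
    simpa [Matrix.mulVec_single, dotProduct_single, hB] using this
  have hBne : B ≠ 0 := ne_of_gt hBpos
  -- the column of A⁻¹
  set u : Fin d → ℝ := fun i => A⁻¹ i p with hu
  have hcol : A *ᵥ u = Pi.single p 1 := by
    ext i
    have : (A * A⁻¹) i p = (1 : Matrix (Fin d) (Fin d) ℝ) i p := by rw [hAinv]
    simpa [Matrix.mulVec, Matrix.mul_apply, dotProduct, Matrix.one_apply,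
      Pi.single_apply, eq_comm, hu] using this
  set δs : Fin d → ℝ := (c / B) • u with hδs
  have hδsp : δs p = c := by
    simp only [hδs, Pi.smul_apply, smul_eq_mul, hu, ← hB]
    exact div_mul_cancel₀ c hBne
  -- dot product against A *ᵥ δs
  have hdot : ∀ v : Fin d → ℝ, v ⬝ᵥ (A *ᵥ δs) = (c / B) * v p := by
    intro v
    rw [hδs, Matrix.mulVec_smul, hcol]
    simp [dotProduct, Pi.single_apply, Finset.mul_sum, mul_comm]
  have hsw : ∀ x y : Fin d → ℝ, x ⬝ᵥ (A *ᵥ y) = y ⬝ᵥ (A *ᵥ x) := by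
    intro x y
    have h2 := Matrix.vecMul_transpose (A := A) (x := x)
    rw [hsymm] at h2
    rw [Matrix.dotProduct_mulVec, h2, dotProduct_comm]
  have hval : δs ⬝ᵥ (A *ᵥ δs) = c ^ 2 / B := by
    rw [hdot, hδsp]; field_simp
  -- lower bound for any δ with δ p = c
  have hlow : ∀ δ : Fin d → ℝ, δ p = c → c ^ 2 / B ≤ δ ⬝ᵥ (A *ᵥ δ) := by
    intro δ hδp
    have hv : (δ - δs) p = 0 := by simp [hδp, hδsp]
    have hexp : δ ⬝ᵥ (A *ᵥ δ) =
        δs ⬝ᵥ (A *ᵥ δs) + 2 * ((δ - δs) ⬝ᵥ (A *ᵥ δs)) + (δ - δs) ⬝ᵥ (A *ᵥ (δ - δs)) := by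
      have h1 : δ = δs + (δ - δs) := by ring
      calc δ ⬝ᵥ (A *ᵥ δ) = (δs + (δ - δs)) ⬝ᵥ (A *ᵥ (δs + (δ - δs))) := by rw [← h1]
        _ = δs ⬝ᵥ (A *ᵥ δs) + δs ⬝ᵥ (A *ᵥ (δ - δs)) + ((δ - δs) ⬝ᵥ (A *ᵥ δs)
              + (δ - δs) ⬝ᵥ (A *ᵥ (δ - δs))) := by
            rw [Matrix.mulVec_add, add_dotProduct, dotProduct_add, dotProduct_add]
        _ = _ := by rw [hsw δs (δ - δs)]; ring
    have hzero : (δ - δs) ⬝ᵥ (A *ᵥ δs) = 0 := by rw [hdot, hv, mul_zero]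
    have hnn : 0 ≤ (δ - δs) ⬝ᵥ (A *ᵥ (δ - δs)) := by
      have := hX.posSemidef.dotProduct_mulVec_nonneg (δ - δs)
      simpa using this
    rw [hexp, hzero, hval]
    linarith
  refine ⟨?_, ?_, ?_⟩
  · intro wComp hwp
    have hrw : ∀ j, ∑ i, wComp i * X i j - ∑ i, w i * X i j
        = ∑ i, (wComp - w) i * X i j := by
      intro j
      rw [← Finset.sum_sub_distrib]
      exact Finset.sum_congr rfl fun i _ => by simp [sub_mul]
    simp only [hrw]
    rw [obq_quad_form_eq]
    exact hlow (wComp - w) (by simp [hwp, hc])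
  · simp only [Pi.sub_apply, Pi.smul_apply, smul_eq_mul, hu, ← hB]
    rw [div_mul_cancel₀ _ hBne]
    ring
  · have hrw : ∀ j, ∑ i, (w - ((w p - q) / B) • u) i * X i j - ∑ i, w i * X i j
        = ∑ i, δs i * X i j := by
      intro j
      rw [← Finset.sum_sub_distrib]
      refine Finset.sum_congr rfl fun i _ => ?_
      simp only [Pi.sub_apply, Pi.smul_apply, smul_eq_mul, hδs, hc]
      ring
    simp only [hrw]
    rw [obq_quad_form_eq]
    exact hval
end

section
/- Let H be a symmetric positive definite real n×n matrix with n ≥ 2, let K := H⁻¹, let w : Fin n → ℝ, and let p ≠ q be two indices. Perform two sequential exact OBS steps: first set w¹ := w − ((w p) / (K p p)) • (fun i => K i p) and K' := K − (1 / K p p) • (fun i j => K i p * K p j); then set w² := w¹ − ((w¹ q) / (K' q q)) • (fun i => K' i q). Then K' q q > 0, the vector w² satisfies w² p = 0 and w² q = 0, and w² is the unique minimizer of the quadratic (v − w) ⬝ᵥ (H *ᵥ (v − w)) over all v : Fin n → ℝ with v p = 0 and v q = 0. That is, pruning one weight at a time with the exact OBS update and the Gaussian-elimination update of the inverse Hessian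 yields the same result as jointly optimally pruning the set {p, q}. -/
open Matrix

/-- Two sequential exact OBS steps (prune weight `p`, update the inverse Hessian by
Gaussian elimination, then prune weight `q`) yield exactly the joint optimal
pruning of the set `{p, q}`: the resulting weights `w2` vanish at `p` and `q` and
are the unique minimizer of `(v − w)ᵀ H (v − w)` over all `v` with
`v p = 0` and `v q = 0`; moreover `K' q q > 0`. -/
theorem exact_obs_two_sequential_steps (n : ℕ) (hn : 2 ≤ n)
    (H : Matrix (Fin n) (Fin n) ℝ) (hH : H.PosDef)
    (w : Fin n → ℝ) (p q : Fin n) (hpq : p ≠ q)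
    (w1 : Fin n → ℝ)
    (hw1 : w1 = w - ((w p) / (H⁻¹ p p)) • (fun i => H⁻¹ i p))
    (K' : Matrix (Fin n) (Fin n) ℝ)
    (hK' : K' = H⁻¹ - (1 / H⁻¹ p p) • Matrix.of (fun i j => H⁻¹ i p * H⁻¹ p j))
    (w2 : Fin n → ℝ)
    (hw2 : w2 = w1 - ((w1 q) / (K' q q)) • (fun i => K' i q)) :
    0 < K' q q ∧ w2 p = 0 ∧ w2 q = 0 ∧
      (∀ v : Fin n → ℝ, v p = 0 → v q = 0 →
        (w2 - w) ⬝ᵥ (H *ᵥ (w2 - w)) ≤ (v - w) ⬝ᵥ (H *ᵥ (v - w))) ∧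
      (∀ v : Fin n → ℝ, v p = 0 → v q = 0 →
        (v - w) ⬝ᵥ (H *ᵥ (v - w)) = (w2 - w) ⬝ᵥ (H *ᵥ (w2 - w)) → v = w2) := by
  set K := H⁻¹ with hKdef
  have hKpd : K.PosDef := hH.inv
  have hsymK : ∀ i j, K i j = K j i := fun i j =>
    (congrFun (congrFun hKpd.1 i) j).symm ▸ rfl
  have hsymH : ∀ i j, H i j = H j i := fun i j =>
    (congrFun (congrFun hH.1 i) j).symm ▸ rfl
  have hHK : H * K = 1 := Matrix.mul_nonsing_inv H (isUnit_iff_ne_zero.mpr hH.det_pos.ne')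
  have hcol : ∀ i j, (H *ᵥ fun k => K k j) i = (1 : Matrix (Fin n) (Fin n) ℝ) i j := by
    intro i j
    rw [← hHK, Matrix.mul_apply]
    simp [Matrix.mulVec, dotProduct]
  have hsymQ : ∀ u v : Fin n → ℝ, u ⬝ᵥ (H *ᵥ v) = v ⬝ᵥ (H *ᵥ u) := by
    intro u v
    simp only [dotProduct, Matrix.mulVec, Finset.mul_sum]
    rw [Finset.sum_comm]
    exact Finset.sum_congr rfl fun i _ => Finset.sum_congr rfl fun j _ => by
      rw [hsymH j i]; ring
  have hKpp : 0 < K p p := by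
    have hx : (Pi.single p 1 : Fin n → ℝ) ≠ 0 := fun h => by simpa using congrFun h p
    have := hKpd.dotProduct_mulVec_pos hx
    simpa [Matrix.mulVec, dotProduct, Pi.single_apply] using this
  have hK'qq : K' q q = K q q - K p q * K p q / K p p := by
    rw [hK']
    simp only [Matrix.sub_apply, Matrix.smul_apply, Matrix.of_apply, smul_eq_mul]
    rw [hsymK q p]
    ring
  have hqqpos : 0 < K' q q := by
    set t : ℝ := K p q / K p p with ht
    have hx : (Pi.single q 1 : Fin n → ℝ) - t • (Pi.single p 1 : Fin n → ℝ) ≠ 0 := by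
      intro h
      have := congrFun h q
      simp [Pi.single_apply, hpq.symm] at this
    have hval := hKpd.dotProduct_mulVec_pos hx
    rw [star_trivial] at hval
    have hsing : ∀ i j : Fin n, (Pi.single i 1 : Fin n → ℝ) ⬝ᵥ (K *ᵥ (Pi.single j 1 : Fin n → ℝ)) = K i j := by
      intro i j
      simp [Matrix.mulVec, dotProduct, Pi.single_apply]
    have hcv : ((Pi.single q 1 : Fin n → ℝ) - t • (Pi.single p 1 : Fin n → ℝ)) ⬝ᵥ
        (K *ᵥ ((Pi.single q 1 : Fin n → ℝ) - t • (Pi.single p 1 : Fin n → ℝ))) = K' q q := by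
      simp only [sub_dotProduct, Matrix.mulVec_sub, dotProduct_sub,
        Matrix.mulVec_smul, smul_dotProduct, dotProduct_smul,
        smul_eq_mul, hsing]
      rw [hK'qq, ht, hsymK q p]
      field_simp
      try ring
    rw [← hcv]
    exact hval
  have hw1p : w1 p = 0 := by
    rw [hw1]; simp only [Pi.sub_apply, Pi.smul_apply, smul_eq_mul]
    field_simp
    ring
  have hK'pq : K' p q = 0 := by
    rw [hK']
    simp only [Matrix.sub_apply, Matrix.smul_apply, Matrix.of_apply, smul_eq_mul]
    field_simp
    ring
  have hw2p : w2 p = 0 := by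
    rw [hw2]; simp [hw1p, hK'pq]
  have hw2q : w2 q = 0 := by
    rw [hw2]; simp only [Pi.sub_apply, Pi.smul_apply, smul_eq_mul]
    field_simp
    ring
  set c1 : ℝ := w p / K p p with hc1
  set c2 : ℝ := w1 q / K' q q with hc2
  have hdec : w2 - w = (-c1 + c2 * (K p q / K p p)) • (fun k => K k p)
      + (-c2) • (fun k => K k q) := by
    funext k
    rw [hw2, hw1, hK']
    simp only [Pi.add_apply, Pi.sub_apply, Pi.smul_apply, smul_eq_mul,
      Matrix.sub_apply, Matrix.smul_apply, Matrix.of_apply]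
    field_simp
    ring
  have hHdec : H *ᵥ (w2 - w) = (-c1 + c2 * (K p q / K p p)) • (Pi.single p 1 : Fin n → ℝ)
      + (-c2) • (Pi.single q 1 : Fin n → ℝ) := by
    rw [hdec]
    funext i
    simp only [Matrix.mulVec_add, Matrix.mulVec_smul, Pi.add_apply, Pi.smul_apply,
      smul_eq_mul, hcol, Matrix.one_apply, Pi.single_apply]
    try simp [eq_comm]
  have hcross : ∀ u : Fin n → ℝ, u p = 0 → u q = 0 → u ⬝ᵥ (H *ᵥ (w2 - w)) = 0 := by
    intro u hup huq
    rw [hHdec]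
    simp [dotProduct_add, dotProduct_smul, hup, huq]
  have hexp : ∀ v : Fin n → ℝ, v p = 0 → v q = 0 → (v - w) ⬝ᵥ (H *ᵥ (v - w)) =
      (v - w2) ⬝ᵥ (H *ᵥ (v - w2)) + (w2 - w) ⬝ᵥ (H *ᵥ (w2 - w)) := by
    intro v hvp hvq
    have hvw : v - w = (v - w2) + (w2 - w) := by abel
    have h1 : (v - w2) ⬝ᵥ (H *ᵥ (w2 - w)) = 0 :=
      hcross _ (by simp [hvp, hw2p]) (by simp [hvq, hw2q])
    have h2 : (w2 - w) ⬝ᵥ (H *ᵥ (v - w2)) = 0 := by rw [hsymQ]; exact h1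
    rw [hvw, add_dotProduct, Matrix.mulVec_add, dotProduct_add,
      dotProduct_add, h1, h2]
    ring
  refine ⟨hqqpos, hw2p, hw2q, ?_, ?_⟩
  · intro v hvp hvq
    rw [hexp v hvp hvq]
    have hps : 0 ≤ (v - w2) ⬝ᵥ (H *ᵥ (v - w2)) := by
      have h := hH.posSemidef.dotProduct_mulVec_nonneg (v - w2)
      rw [star_trivial] at h
      exact h
    linarith
  · intro v hvp hvq heq
    rw [hexp v hvp hvq] at heq
    have hz : (v - w2) ⬝ᵥ (H *ᵥ (v - w2)) = 0 := by linarith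
    by_contra hne
    have : 0 < (v - w2) ⬝ᵥ (H *ᵥ (v - w2)) := by
      have h := hH.dotProduct_mulVec_pos (sub_ne_zero.mpr hne)
      rw [star_trivial] at h
      exact h
    linarith
end
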